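/- On the complete graph on N vertices, every skew-symmetric match-up function M admits a decomposition M = grad s + curl* Φ for some vertex function s and alternating triangular function Φ, and the two components M_grad = grad s and M_curl = curl* Φ are uniquely determined by M. -/

import Mathlib

open Finset

lemma hodge_sum_antisym {n : ℕ} (f : Fin n → Fin n → ℝ) (h : ∀ j k, f j k = - f k j) :
    ∑ j, ∑ k, f j k = 0 := by
  have h1 : ∑ j, ∑ k, f j k = ∑ j, ∑ k, f k j := Finset.sum_comm
  have h2 : ∑ j, ∑ k, f k j = - ∑ j, ∑ k, f j k := by
    rw [← Finset.sum_neg_distrib]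
    apply Finset.sum_congr rfl
    intro j _
    rw [← Finset.sum_neg_distrib]
    apply Finset.sum_congr rfl
    intro k _
    exact h k j
  linarith

lemma hodge_sum_filter_ne {n : ℕ} (i j : Fin n) (h : i ≠ j) (f : Fin n → ℝ) :
    ∑ k ∈ univ.filter (fun k => k ≠ i ∧ k ≠ j), f k = (∑ k, f k) - f i - f j := by
  have hset : univ.filter (fun k => k ≠ i ∧ k ≠ j) = (univ \ {i, j}) := by
    ext k; simp [and_comm]
  rw [hset, Finset.sum_sdiff_eq_sub (by simp), Finset.sum_pair h]
  ring

lemma hodge_curl_div_free {n : ℕ} (Φ : Fin n → Fin n → Fin n → ℝ)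
    (hc : ∀ i j k, Φ i j k = Φ j k i) (ha : ∀ i j k, Φ i j k = -Φ j i k) (i : Fin n) :
    ∑ j, ∑ k ∈ univ.filter (fun k => k ≠ i ∧ k ≠ j), Φ i j k = 0 := by
  have hswap : ∀ a b c, Φ a b c = -Φ a c b := by
    intro a b c
    rw [hc a b c, ha b c a, hc a c b]
  have hz1 : ∀ a b, Φ a a b = 0 := by
    intro a b; have := ha a a b; linarith
  have hz2 : ∀ a b, Φ a b a = 0 := by
    intro a b; have := hswap a b a; rw [hc a b a] at this
    have h2 := hswap b a a
    have h3 := ha b a a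
    have h4 := hz1 a a
    have := ha a b a
    have := hc a b a
    nlinarith [hz1 b a, hc a b a, hswap a b a]
  set F : Fin n → Fin n → ℝ := fun j k => if k ≠ i ∧ k ≠ j then Φ i j k else 0 with hF
  have hrw : ∀ j, ∑ k ∈ univ.filter (fun k => k ≠ i ∧ k ≠ j), Φ i j k = ∑ k, F j k := by
    intro j; rw [Finset.sum_filter]
  calc ∑ j, ∑ k ∈ univ.filter (fun k => k ≠ i ∧ k ≠ j), Φ i j k
      = ∑ j, ∑ k, F j k := by exact Finset.sum_congr rfl (fun j _ => hrw j)
    _ = 0 := by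
        apply hodge_sum_antisym
        intro j k
        by_cases h1 : k ≠ i ∧ k ≠ j <;> by_cases h2 : j ≠ i ∧ j ≠ k <;>
          simp only [hF, h1, h2, if_true, if_false, if_pos, if_neg, not_true, not_false_iff]
        · simp [h1, h2, hswap i j k]
        · -- h1 holds, h2 fails: j = i (since j ≠ k from h1.2)
          have hj : j = i := by
            by_contra hji
            exact h2 ⟨hji, fun hjk => h1.2 hjk.symm⟩
          simp [h1, h2, hj, hz1]
        · -- h2 holds, h1 fails: k = i
          have hk : k = i := by
            by_contra hki
            exact h1 ⟨hki, fun hkj => h2.2 hkj.symm⟩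
          simp [h1, h2, hk, hz1, hz2]
        · simp [h1, h2]

theorem hodge_decomposition {N : ℕ} (M : Fin N → Fin N → ℝ)
    (hskew : ∀ i j, M i j = -M j i) :
    (∃ (s : Fin N → ℝ) (Φ : Fin N → Fin N → Fin N → ℝ),
      (∀ i j k, Φ i j k = Φ j k i) ∧ (∀ i j k, Φ i j k = -Φ j i k) ∧
      ∀ i j, M i j = (s i - s j) + ∑ k ∈ univ.filter (fun k => k ≠ i ∧ k ≠ j), Φ i j k) ∧
    (∀ (s s' : Fin N → ℝ) (Φ Φ' : Fin N → Fin N → Fin N → ℝ),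
      (∀ i j k, Φ i j k = Φ j k i) → (∀ i j k, Φ i j k = -Φ j i k) →
      (∀ i j k, Φ' i j k = Φ' j k i) → (∀ i j k, Φ' i j k = -Φ' j i k) →
      (∀ i j, M i j = (s i - s j) + ∑ k ∈ univ.filter (fun k => k ≠ i ∧ k ≠ j), Φ i j k) →
      (∀ i j, M i j = (s' i - s' j) + ∑ k ∈ univ.filter (fun k => k ≠ i ∧ k ≠ j), Φ' i j k) →
      (∀ i j, s i - s j = s' i - s' j) ∧
      (∀ i j, ∑ k ∈ univ.filter (fun k => k ≠ i ∧ k ≠ j), Φ i j k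
            = ∑ k ∈ univ.filter (fun k => k ≠ i ∧ k ≠ j), Φ' i j k)) := by
  have hM0 : ∀ i, M i i = 0 := fun i => by have := hskew i i; linarith
  constructor
  · -- Existence
    set s : Fin N → ℝ := fun i => (∑ j, M i j) / N with hs
    set R : Fin N → Fin N → ℝ := fun i j => M i j - (s i - s j) with hRdef
    set Φ : Fin N → Fin N → Fin N → ℝ := fun i j k => (R i j + R j k + R k i) / N with hΦ
    have hRskew : ∀ i j, R i j = -R j i := by
      intro i j; simp only [hRdef]; rw [hskew i j]; ring
    have hR0 : ∀ i, R i i = 0 := fun i => by have := hRskew i i; linarith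
    have hssum : ∑ k, s k = 0 := by
      simp only [hs]
      rw [← Finset.sum_div, hodge_sum_antisym M hskew, zero_div]
    have hRrow : ∀ i : Fin N, ∑ k, R i k = 0 := by
      intro i
      have hN : (N : ℝ) ≠ 0 := Nat.cast_ne_zero.mpr i.pos.ne'
      simp only [hRdef]
      rw [Finset.sum_sub_distrib, Finset.sum_sub_distrib, Finset.sum_const,
        Finset.card_univ, Fintype.card_fin, hssum, nsmul_eq_mul]
      simp only [hs]
      field_simp
      ring
    have hRcol : ∀ i : Fin N, ∑ k, R k i = 0 := by
      intro i
      have : ∑ k, R k i = ∑ k, -(R i k) := by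
        apply Finset.sum_congr rfl; intro k _; rw [hRskew k i]
      rw [this, Finset.sum_neg_distrib, hRrow i, neg_zero]
    refine ⟨s, Φ, ?_, ?_, ?_⟩
    · intro i j k; simp only [hΦ]; ring
    · intro i j k; simp only [hΦ]
      rw [hRskew i j, hRskew j k, hRskew k i]
      ring
    · intro i j
      by_cases hij : i = j
      · subst hij
        have : ∀ k, Φ i i k = 0 := by
          intro k; simp only [hΦ]
          rw [hR0 i, hRskew i k]; ring
        rw [hM0 i]
        simp [this]
      · have hN : (N : ℝ) ≠ 0 := Nat.cast_ne_zero.mpr i.pos.ne'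
        rw [hodge_sum_filter_ne i j hij (fun k => Φ i j k)]
        have hsum : ∑ k, Φ i j k = R i j := by
          simp only [hΦ]
          rw [← Finset.sum_div]
          rw [show ∑ k, (R i j + R j k + R k i) = (N : ℝ) * R i j + (∑ k, R j k) + (∑ k, R k i) by
            rw [Finset.sum_add_distrib, Finset.sum_add_distrib, Finset.sum_const,
              Finset.card_univ, Fintype.card_fin, nsmul_eq_mul]]
          rw [hRrow j, hRcol i]
          field_simp
          ring
        have hΦi : Φ i j i = 0 := by
          simp only [hΦ]; rw [hR0 i, hRskew j i]; ring
        have hΦj : Φ i j j = 0 := by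
          simp only [hΦ]; rw [hR0 j, hRskew j i]; ring
        rw [hsum, hΦi, hΦj]
        simp only [hRdef]
        ring
  · -- Uniqueness
    intro s s' Φ Φ' hc ha hc' ha' hM hM'
    have div : ∀ i, ∑ j, ∑ k ∈ univ.filter (fun k => k ≠ i ∧ k ≠ j), Φ i j k = 0 :=
      hodge_curl_div_free Φ hc ha
    have div' : ∀ i, ∑ j, ∑ k ∈ univ.filter (fun k => k ≠ i ∧ k ≠ j), Φ' i j k = 0 :=
      hodge_curl_div_free Φ' hc' ha'
    set d : Fin N → ℝ := fun i => s i - s' i with hd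
    have key : ∀ i, (N : ℝ) * d i = ∑ j, d j := by
      intro i
      have h1 : ∑ j, (d i - d j) =
          ∑ j, ((∑ k ∈ univ.filter (fun k => k ≠ i ∧ k ≠ j), Φ' i j k)
              - (∑ k ∈ univ.filter (fun k => k ≠ i ∧ k ≠ j), Φ i j k)) := by
        apply Finset.sum_congr rfl
        intro j _
        have e1 := hM i j
        have e2 := hM' i j
        simp only [hd]
        linarith
      have hL : ∑ j, (d i - d j) = (N : ℝ) * d i - ∑ j, d j := by
        rw [Finset.sum_sub_distrib, Finset.sum_const, Finset.card_univ, Fintype.card_fin,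
          nsmul_eq_mul]
      have hR : ∑ j, ((∑ k ∈ univ.filter (fun k => k ≠ i ∧ k ≠ j), Φ' i j k)
              - (∑ k ∈ univ.filter (fun k => k ≠ i ∧ k ≠ j), Φ i j k)) = 0 := by
        rw [Finset.sum_sub_distrib, div' i, div i, sub_zero]
      rw [hL, hR] at h1
      linarith
    have hdconst : ∀ i j, d i = d j := by
      intro i j
      have hN : (N : ℝ) ≠ 0 := Nat.cast_ne_zero.mpr i.pos.ne'
      have := key i
      have := key j
      have : (N : ℝ) * d i = (N : ℝ) * d j := by rw [key i, key j]
      exact mul_left_cancel₀ hN this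
    have hgrad : ∀ i j, s i - s j = s' i - s' j := by
      intro i j
      have := hdconst i j
      simp only [hd] at this
      linarith
    refine ⟨hgrad, ?_⟩
    intro i j
    have e1 := hM i j
    have e2 := hM' i j
    have := hgrad i j
    linarith
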